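/- arXiv:1504.00912 — 2 statements merged into one kernel-verified Lean document; each statement's English description precedes it below -/
import Mathlib

section
/- Let n ≥ 2 and α > 0. There exists C > 0 depending only on n and α such that: if w is continuous on cl B₁⁺, twice differentiable in B₁ ∩ {x_n > 0} with x_n^α Δ_{x′}w + w_{nn} = 0 there, w = 0 on B₁ ∩ {x_n = 0}, and ‖w‖_{L^∞(B₁⁺)} ≤ 1, then |w(x)| ≤ C·x_n for all x ∈ B_{1/2}⁺. -/
open Metric Set

noncomputable section

/-- The last coordinate index of `Fin n` (for `n ≥ 2`). -/
def lastIdx (n : ℕ) (hn : 2 ≤ n) : Fin n := ⟨n - 1, by omega⟩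

/-- The last ("vertical") coordinate `x_n` of a point `x ∈ ℝⁿ`. -/
def xLast (n : ℕ) (hn : 2 ≤ n) (x : EuclideanSpace ℝ (Fin n)) : ℝ := x (lastIdx n hn)

/-- `|x′|²`, the squared norm of the tangential part of `x`. -/
def sqT (n : ℕ) (x : EuclideanSpace ℝ (Fin n)) : ℝ :=
  ∑ i : Fin n, if (i : ℕ) < n - 1 then (x i) ^ 2 else 0

/-- The projection onto the first `n-1` (tangential) coordinates. -/
def projT (n : ℕ) (x : EuclideanSpace ℝ (Fin n)) : EuclideanSpace ℝ (Fin (n - 1)) :=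
  (EuclideanSpace.equiv (Fin (n - 1)) ℝ).symm fun i => x (Fin.castLE (Nat.sub_le n 1) i)

/-- The model solution `U₀(x) = ½|x′|² + x_n^{2+α}/((1+α)(2+α))`. -/
def U0 (n : ℕ) (hn : 2 ≤ n) (α : ℝ) (x : EuclideanSpace ℝ (Fin n)) : ℝ :=
  sqT n x / 2 + (xLast n hn x) ^ (2 + α) / ((1 + α) * (2 + α))

/-- The section `S_h(U₀) = {x : x_n ≥ 0, U₀(x) < h}`. -/
def SU0 (n : ℕ) (hn : 2 ≤ n) (α h : ℝ) : Set (EuclideanSpace ℝ (Fin n)) :=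
  {x | 0 ≤ xLast n hn x ∧ U0 n hn α x < h}

/-- The Hessian matrix of second partial derivatives of `u` at `x`. -/
def Hess (n : ℕ) (u : EuclideanSpace ℝ (Fin n) → ℝ) (x : EuclideanSpace ℝ (Fin n)) :
    Matrix (Fin n) (Fin n) ℝ :=
  Matrix.of fun i j =>
    fderiv ℝ (fun y => fderiv ℝ u y (EuclideanSpace.single j 1)) x (EuclideanSpace.single i 1)

/-- `u` is twice differentiable at `x`. -/
def TwiceDiffAt (n : ℕ) (u : EuclideanSpace ℝ (Fin n) → ℝ) (x : EuclideanSpace ℝ (Fin n)) : Prop :=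
  DifferentiableAt ℝ u x ∧
    ∀ j, DifferentiableAt ℝ (fun y => fderiv ℝ u y (EuclideanSpace.single j 1)) x

/-- A sliding along `x_n = 0`: `A x = x + x_n • τ` with `τ · e_n = 0`. -/
def IsSliding (n : ℕ) (hn : 2 ≤ n)
    (A : EuclideanSpace ℝ (Fin n) →L[ℝ] EuclideanSpace ℝ (Fin n)) : Prop :=
  ∃ τ : EuclideanSpace ℝ (Fin n), τ (lastIdx n hn) = 0 ∧
    ∀ x, A x = x + (xLast n hn x) • τ

/-- The distance to the boundary `d_{∂Ω}`. -/
def distBd (n : ℕ) (Ω : Set (EuclideanSpace ℝ (Fin n))) (x : EuclideanSpace ℝ (Fin n)) : ℝ :=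
  Metric.infDist x (frontier Ω)

/-- The diagonal matrix `F_h = diag(h^{1/2}, …, h^{1/2}, h^{1/(2+α)})` as a linear map. -/
def Fh (n : ℕ) (hn : 2 ≤ n) (α h : ℝ) :
    EuclideanSpace ℝ (Fin n) →L[ℝ] EuclideanSpace ℝ (Fin n) :=
  LinearMap.toContinuousLinearMap
    (Matrix.toEuclideanLin
      (Matrix.diagonal fun i : Fin n =>
        if (i : ℕ) < n - 1 then h ^ (1 / 2 : ℝ) else h ^ (1 / (2 + α))))

open Filter Topology in
private lemma secondDerivTest {F F' : ℝ → ℝ} {d : ℝ}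
    (hF : ∀ᶠ t in 𝓝 (0:ℝ), HasDerivAt F (F' t) t)
    (hd : HasDerivAt F' d 0)
    (hmax : IsLocalMax F 0) : d ≤ 0 := by
  by_contra hpos
  push_neg at hpos
  have hF0 : F' 0 = 0 := by
    have h1 : deriv F 0 = F' 0 := hF.self_of_nhds.deriv
    have h2 : deriv F 0 = 0 := hmax.deriv_eq_zero
    linarith
  have hslope : Tendsto (slope F' 0) (𝓝[≠] (0:ℝ)) (𝓝 d) :=
    hasDerivAt_iff_tendsto_slope.1 hd
  have hev0 : ∀ᶠ t in 𝓝[>] (0:ℝ), 0 < slope F' 0 t := by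
    have h : ∀ᶠ t in 𝓝[≠] (0:ℝ), 0 < slope F' 0 t :=
      hslope.eventually (eventually_gt_nhds hpos)
    exact nhdsWithin_mono 0 (fun t (ht : t ∈ Set.Ioi 0) => ne_of_gt ht) h
  have hev1 : ∀ᶠ t in 𝓝[>] (0:ℝ), 0 < F' t := by
    filter_upwards [hev0, self_mem_nhdsWithin] with t ht ht0
    have ht0' : (0:ℝ) < t := ht0
    have hs : slope F' 0 t = F' t / t := by
      rw [slope_def_field, hF0, sub_zero, sub_zero]
    rw [hs] at ht
    have h2 := mul_pos ht ht0'
    rwa [div_mul_cancel₀ _ (ne_of_gt ht0')] at h2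
  have hev2 : ∀ᶠ t in 𝓝[>] (0:ℝ), HasDerivAt F (F' t) t := nhdsWithin_le_nhds hF
  have hev3 : ∀ᶠ t in 𝓝[>] (0:ℝ), F t ≤ F 0 := nhdsWithin_le_nhds hmax
  obtain ⟨ε, hε, hsub⟩ := mem_nhdsGT_iff_exists_Ioc_subset.1
    (hev1.and (hev2.and hev3))
  have hε0 : (0:ℝ) < ε := hε
  have hmono : StrictMonoOn F (Set.Icc 0 ε) := by
    apply strictMonoOn_of_deriv_pos (convex_Icc 0 ε)
    · intro x hx
      rcases eq_or_lt_of_le hx.1 with h0 | h0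
      · subst h0; exact hF.self_of_nhds.continuousAt.continuousWithinAt
      · exact ((hsub ⟨h0, hx.2⟩).2.1).continuousAt.continuousWithinAt
    · intro x hx
      rw [interior_Icc] at hx
      rw [((hsub ⟨hx.1, le_of_lt hx.2⟩).2.1).deriv]
      exact (hsub ⟨hx.1, le_of_lt hx.2⟩).1
  have h1 : F 0 < F ε := hmono ⟨le_refl 0, le_of_lt hε0⟩ ⟨le_of_lt hε0, le_refl ε⟩ hε0
  have h2 : F ε ≤ F 0 := (hsub ⟨hε0, le_refl ε⟩).2.2
  linarith

private lemma hess_neg (n : ℕ) (w : EuclideanSpace ℝ (Fin n) → ℝ)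
    (x : EuclideanSpace ℝ (Fin n)) (i j : Fin n) :
    Hess n (fun y => -w y) x i j = -Hess n w x i j := by
  have h1 : (fun y => fderiv ℝ (fun z => -w z) y (EuclideanSpace.single j 1))
      = fun y => -(fderiv ℝ w y (EuclideanSpace.single j 1)) := by
    funext y; rw [fderiv_fun_neg, ContinuousLinearMap.neg_apply]
  simp only [Hess, Matrix.of_apply]
  rw [h1, fderiv_fun_neg, ContinuousLinearMap.neg_apply]

private lemma sphereArith (u p q t X : ℝ) (hu0 : 0 ≤ u) (ht0 : 0 ≤ t)
    (hu : u + t ^ 2 = 9 / 16) (hCS : p ^ 2 ≤ u * q) (hq0 : 0 ≤ q) (hq4 : q ≤ 1 / 4)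
    (hX0 : 0 ≤ X) (hX3 : 3 / 8 < t → 3 * t ≤ X) :
    1 ≤ 100 * (u - 2 * p + q) + X := by
  rcases le_or_gt t (3 / 8) with hts | hts
  · have hu27 : 27 / 64 ≤ u := by nlinarith
    nlinarith [hCS, sq_nonneg (u - q), sq_nonneg (100 * u + 100 * q - 1), sq_nonneg p]
  · have h := hX3 hts
    nlinarith [hCS, sq_nonneg (u - q), mul_nonneg hu0 hq0]

open Filter Topology in
private lemma oneSided (n : ℕ) (hn : 2 ≤ n) (α : ℝ) (hα : 0 < α)
    (w : EuclideanSpace ℝ (Fin n) → ℝ)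
    (hcont : ContinuousOn w (closedBall 0 1 ∩ {x | 0 ≤ xLast n hn x}))
    (hdiff : ∀ x ∈ ball 0 1 ∩ {x | 0 < xLast n hn x}, TwiceDiffAt n w x)
    (hpde : ∀ x ∈ ball 0 1 ∩ {x | 0 < xLast n hn x},
      (xLast n hn x) ^ α *
          (∑ i : Fin n, if (i : ℕ) < n - 1 then Hess n w x i i else 0) +
        Hess n w x (lastIdx n hn) (lastIdx n hn) = 0)
    (hzero : ∀ x ∈ ball (0 : EuclideanSpace ℝ (Fin n)) 1, xLast n hn x = 0 → w x = 0)
    (hbd : ∀ x ∈ ball 0 1 ∩ {x | 0 ≤ xLast n hn x}, |w x| ≤ 1)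
    (x₀ : EuclideanSpace ℝ (Fin n)) (hx₀ : x₀ ∈ ball 0 (1 / 2) ∩ {x | 0 ≤ xLast n hn x}) :
    w x₀ ≤ (200 * n / ((1 + α) * (2 + α)) + 4) * xLast n hn x₀ := by
  have hα1 : (0:ℝ) < 1 + α := by linarith only [hα]
  have hα2 : (0:ℝ) < 2 + α := by linarith only [hα]
  have hα12 : (0:ℝ) < (1 + α) * (2 + α) := mul_pos hα1 hα2
  obtain ⟨c, hc_def⟩ : ∃ c : ℝ, c = 200 * n / ((1 + α) * (2 + α)) + 1 := ⟨_, rfl⟩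
  have hc0 : 0 < c := by
    have h1 : (0:ℝ) ≤ 200 * n / ((1 + α) * (2 + α)) :=
      div_nonneg (by positivity) hα12.le
    rw [hc_def]
    linarith only [h1]
  obtain ⟨K, hK_def⟩ : ∃ K : ℝ, K = c + 3 := ⟨_, rfl⟩
  have hcK : c * ((1 + α) * (2 + α)) = 200 * n + (1 + α) * (2 + α) := by
    have hne : ((1 + α) * (2 + α)) ≠ 0 := ne_of_gt hα12
    rw [hc_def]
    field_simp
  have hrp0 : ∀ t : ℝ, 0 ≤ t → 0 ≤ t ^ (2 + α) := fun t ht => Real.rpow_nonneg ht _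
  have hrp : ∀ t : ℝ, 0 ≤ t → t ≤ 1 → t ^ (2 + α) ≤ t := by
    intro t ht0 ht1
    rcases eq_or_lt_of_le ht0 with h | h
    · rw [← h, Real.zero_rpow (ne_of_gt hα2)]
    · calc t ^ (2 + α) ≤ t ^ (1:ℝ) :=
            Real.rpow_le_rpow_of_exponent_ge h ht1 (by linarith only [hα])
        _ = t := Real.rpow_one t
  have hxL : ∀ x : EuclideanSpace ℝ (Fin n), xLast n hn x = x (lastIdx n hn) := fun _ => rfl
  have hlastc : Continuous (xLast n hn) := by
    have h : Continuous fun x : EuclideanSpace ℝ (Fin n) => x (lastIdx n hn) :=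
      (EuclideanSpace.proj (lastIdx n hn)).continuous
    exact h
  set T : EuclideanSpace ℝ (Fin n) → ℝ :=
    fun x => ∑ i : Fin n, if (i : ℕ) < n - 1 then 100 * (x i - x₀ i) ^ 2 else 0 with hT_def
  set b : EuclideanSpace ℝ (Fin n) → ℝ :=
    fun x => T x + (K * xLast n hn x - c * (xLast n hn x) ^ (2 + α)) with hb_def
  set v : EuclideanSpace ℝ (Fin n) → ℝ := fun x => w x - b x with hv_def
  set D : Set (EuclideanSpace ℝ (Fin n)) :=
    closedBall 0 (3 / 4) ∩ {x | 0 ≤ xLast n hn x} with hD_def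
  have hT0 : ∀ x, 0 ≤ T x := by
    intro x
    apply Finset.sum_nonneg
    intro i _
    split <;> positivity
  have hTc : Continuous T := by
    apply continuous_finset_sum
    intro i _
    by_cases hi : (i : ℕ) < n - 1
    · simp only [if_pos hi]
      exact continuous_const.mul (((EuclideanSpace.proj i).continuous.sub continuous_const).pow 2)
    · simp only [if_neg hi]; exact continuous_const
  have hbc : Continuous b := by
    apply hTc.add
    apply (continuous_const.mul hlastc).sub
    exact continuous_const.mul ((Real.continuous_rpow_const (by linarith only [hα])).comp hlastc)
  have hDsub : D ⊆ closedBall 0 1 ∩ {x | 0 ≤ xLast n hn x} := by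
    intro x hx
    exact ⟨closedBall_subset_closedBall (by norm_num) hx.1, hx.2⟩
  have hvD : ContinuousOn v D := (hcont.mono hDsub).sub hbc.continuousOn
  have hDc : IsCompact D :=
    (isCompact_closedBall _ _).inter_right (isClosed_le continuous_const hlastc)
  have hDne : D.Nonempty := by
    refine ⟨0, mem_closedBall_self (by norm_num), ?_⟩
    show (0:ℝ) ≤ xLast n hn 0
    rw [hxL]
    simp
  obtain ⟨z, hzD, hzmax⟩ := hDc.exists_isMaxOn hDne hvD
  have hzmax' : ∀ x ∈ D, v x ≤ v z := fun x hx => hzmax hx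
  have hz34 : ‖z‖ ≤ 3 / 4 := mem_closedBall_zero_iff.1 hzD.1
  have hzn : 0 ≤ xLast n hn z := hzD.2
  have hlast_not : ¬ ((lastIdx n hn : ℕ) < n - 1) := by simp [lastIdx]
  have hne_last : ∀ i : Fin n, i ≠ lastIdx n hn → (i : ℕ) < n - 1 := by
    intro i hi
    have h1 : (i : ℕ) < n := i.isLt
    have h2 : (i : ℕ) ≠ n - 1 := by
      intro h
      exact hi (Fin.ext (by simp [lastIdx, h]))
    omega
  have hnormsq : ∀ x : EuclideanSpace ℝ (Fin n),
      ‖x‖ ^ 2 = (∑ i : Fin n, if (i : ℕ) < n - 1 then (x i) ^ 2 else 0)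
        + (xLast n hn x) ^ 2 := by
    intro x
    have h1 : ‖x‖ ^ 2 = ∑ i : Fin n, (x i) ^ 2 := by
      rw [EuclideanSpace.norm_eq, Real.sq_sqrt (by positivity)]
      congr 1
      funext i
      rw [Real.norm_eq_abs, sq_abs]
    rw [h1]
    have h2 : ∀ i : Fin n, (x i) ^ 2 =
        (if (i : ℕ) < n - 1 then (x i) ^ 2 else 0)
          + (if (i : ℕ) < n - 1 then 0 else (x i) ^ 2) := by
      intro i; split <;> ring
    rw [Finset.sum_congr rfl fun i _ => h2 i, Finset.sum_add_distrib]
    congr 1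
    rw [Finset.sum_eq_single (lastIdx n hn)]
    · rw [if_neg hlast_not, hxL]
    · intro i _ hi
      rw [if_pos (hne_last i hi)]
    · intro h; exact absurd (Finset.mem_univ _) h
  have hU'o : IsOpen (ball (0 : EuclideanSpace ℝ (Fin n)) 1 ∩ {x | 0 < xLast n hn x}) :=
    isOpen_ball.inter (isOpen_lt continuous_const hlastc)
  have hvz : v z ≤ 0 := by
    rcases eq_or_lt_of_le hzn with hz0 | hz0
    · -- bottom boundary : x_n = 0
      have hzb : z ∈ ball (0 : EuclideanSpace ℝ (Fin n)) 1 :=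
        mem_ball_zero_iff.2 (by linarith only [hz34])
      have hw0 : w z = 0 := hzero z hzb hz0.symm
      have hb0 : b z = T z := by
        simp only [hb_def, ← hz0, Real.zero_rpow (ne_of_gt hα2)]
        ring
      simp only [hv_def, hw0, hb0]
      linarith only [hT0 z]
    · rcases eq_or_lt_of_le hz34 with hsphere | hint
      · -- sphere ‖z‖ = 3/4
        have hzb : z ∈ ball (0 : EuclideanSpace ℝ (Fin n)) 1 :=
          mem_ball_zero_iff.2 (by rw [hsphere]; norm_num)
        have hwz : w z ≤ 1 := (abs_le.1 (hbd z ⟨hzb, hzn⟩)).2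
        obtain ⟨t, ht_def⟩ : ∃ t : ℝ, t = xLast n hn z := ⟨_, rfl⟩
        have hznt : 0 ≤ t := by rw [ht_def]; exact hzn
        obtain ⟨u, hu_def⟩ : ∃ u : ℝ,
          u = ∑ i : Fin n, (if (i : ℕ) < n - 1 then (z i) ^ 2 else 0) := ⟨_, rfl⟩
        obtain ⟨p, hp_def⟩ : ∃ p : ℝ,
          p = ∑ i : Fin n, (if (i : ℕ) < n - 1 then z i * x₀ i else 0) := ⟨_, rfl⟩
        obtain ⟨q, hq_def⟩ : ∃ q : ℝ,
          q = ∑ i : Fin n, (if (i : ℕ) < n - 1 then (x₀ i) ^ 2 else 0) := ⟨_, rfl⟩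
        have hu0 : 0 ≤ u := by
          rw [hu_def]
          apply Finset.sum_nonneg; intro i _; split <;> positivity
        have hq0 : 0 ≤ q := by
          rw [hq_def]
          apply Finset.sum_nonneg; intro i _; split <;> positivity
        have hu : u + t ^ 2 = 9 / 16 := by
          have h := hnormsq z
          rw [hsphere, ← hu_def, ← ht_def] at h
          norm_num at h
          linarith only [h]
        have ht34 : t ≤ 3 / 4 := by nlinarith [hu, hu0, hznt]
        have hTz : T z = 100 * (u - 2 * p + q) := by
          have h2 : ∀ i : Fin n,
              (if (i : ℕ) < n - 1 then 100 * (z i - x₀ i) ^ 2 else 0) =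
                100 * ((if (i : ℕ) < n - 1 then (z i) ^ 2 else 0)
                  - 2 * (if (i : ℕ) < n - 1 then z i * x₀ i else 0)
                  + (if (i : ℕ) < n - 1 then (x₀ i) ^ 2 else 0)) := by
            intro i; split <;> ring
          simp only [hT_def]
          rw [Finset.sum_congr rfl fun i _ => h2 i, ← Finset.mul_sum]
          rw [Finset.sum_add_distrib, Finset.sum_sub_distrib, ← Finset.mul_sum,
            ← hu_def, ← hp_def, ← hq_def]
        have hCS : p ^ 2 ≤ u * q := by
          have h := Finset.sum_mul_sq_le_sq_mul_sq Finset.univ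
            (fun i : Fin n => if (i : ℕ) < n - 1 then z i else 0)
            (fun i : Fin n => if (i : ℕ) < n - 1 then x₀ i else 0)
          have e1 : ∑ i : Fin n,
              (if (i : ℕ) < n - 1 then z i else 0) * (if (i : ℕ) < n - 1 then x₀ i else 0)
                = p := by
            rw [hp_def]
            apply Finset.sum_congr rfl; intro i _; split <;> simp
          have e2 : ∑ i : Fin n, (if (i : ℕ) < n - 1 then z i else 0) ^ 2 = u := by
            rw [hu_def]
            apply Finset.sum_congr rfl; intro i _; split <;> simp
          have e3 : ∑ i : Fin n, (if (i : ℕ) < n - 1 then x₀ i else 0) ^ 2 = q := by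
            rw [hq_def]
            apply Finset.sum_congr rfl; intro i _; split <;> simp
          rw [e1, e2, e3] at h
          exact h
        have hq4 : q ≤ 1 / 4 := by
          have h1 : ‖x₀‖ < 1 / 2 := mem_ball_zero_iff.1 hx₀.1
          have h2 := hnormsq x₀
          rw [← hq_def] at h2
          have h3 : (0:ℝ) ≤ ‖x₀‖ := norm_nonneg _
          nlinarith only [h1, h2, h3, sq_nonneg (xLast n hn x₀)]
        have hX0 : 0 ≤ K * t - c * t ^ (2 + α) := by
          have h1 : t ^ (2 + α) ≤ t := hrp t hznt (by linarith only [ht34])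
          nlinarith only [h1, hc0, hznt, hK_def]
        have hX3 : 3 / 8 < t → 3 * t ≤ K * t - c * t ^ (2 + α) := by
          intro hts
          have h1 : t ^ (2 + α) ≤ t := hrp t hznt (by linarith only [ht34])
          nlinarith only [h1, hc0, hznt, hK_def]
        have hb1 : 1 ≤ b z := by
          have harith := sphereArith u p q t (K * t - c * t ^ (2 + α))
            hu0 hznt hu hCS hq0 hq4 hX0 hX3
          simp only [hb_def]
          rw [← ht_def, hTz]
          linarith only [harith]
        simp only [hv_def]
        linarith only [hwz, hb1]
      · -- interior point: contradiction via maximum principle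
        exfalso
        obtain ⟨t, ht_def⟩ : ∃ t : ℝ, t = xLast n hn z := ⟨_, rfl⟩
        have hz0t : 0 < t := by rw [ht_def]; exact hz0
        have hzU' : z ∈ ball (0 : EuclideanSpace ℝ (Fin n)) 1 ∩ {x | 0 < xLast n hn x} :=
          ⟨mem_ball_zero_iff.2 (by linarith only [hint]), hz0⟩
        have hzV : z ∈ ball (0 : EuclideanSpace ℝ (Fin n)) (3 / 4) ∩ {x | 0 < xLast n hn x} :=
          ⟨mem_ball_zero_iff.2 hint, hz0⟩
        have hVo : IsOpen (ball (0 : EuclideanSpace ℝ (Fin n)) (3 / 4)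
            ∩ {x | 0 < xLast n hn x}) :=
          isOpen_ball.inter (isOpen_lt continuous_const hlastc)
        have hVD : (ball (0 : EuclideanSpace ℝ (Fin n)) (3 / 4) ∩ {x | 0 < xLast n hn x}) ⊆ D :=
          by
          intro x hx
          exact ⟨ball_subset_closedBall hx.1, le_of_lt (show 0 < xLast n hn x from hx.2)⟩
        have hDmem : D ∈ 𝓝 z := Filter.mem_of_superset (hVo.mem_nhds hzV) hVD
        have hloc : ∀ᶠ x in 𝓝 z, v x ≤ v z := eventually_of_mem hDmem fun x hx => hzmax' x hx
        have hkey : ∀ j : Fin n, Hess n w z j j ≤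
            (if (j : ℕ) < n - 1 then 200 else -(c * ((2 + α) * ((1 + α) * t ^ α)))) := by
          intro j
          set e : EuclideanSpace ℝ (Fin n) := EuclideanSpace.single j (1:ℝ) with he_def
          set L : ℝ → EuclideanSpace ℝ (Fin n) := fun s => z + s • e with hL_def
          have hL0 : L 0 = z := by simp [hL_def]
          have hLc : Continuous L := by
            rw [hL_def]
            exact continuous_const.add (continuous_id.smul continuous_const)
          have hLt : Tendsto L (𝓝 0) (𝓝 z) := hL0 ▸ hLc.tendsto 0
          have hLder : ∀ s : ℝ, HasDerivAt L e s := by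
            intro s
            have h := ((hasDerivAt_id s).smul_const e).const_add z
            rw [one_smul] at h; exact h
          have hLcoord : ∀ (s : ℝ) (i : Fin n), L s i = z i + s * (if i = j then 1 else 0) := by
            intro s i
            simp [hL_def, he_def, EuclideanSpace.single_apply, PiLp.add_apply, PiLp.smul_apply,
              smul_eq_mul]
          have hmemU : ∀ᶠ s in 𝓝 (0:ℝ),
              L s ∈ ball (0 : EuclideanSpace ℝ (Fin n)) 1 ∩ {x | 0 < xLast n hn x} :=
            hLt.eventually (eventually_of_mem (hU'o.mem_nhds hzU') fun x hx => hx)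
          have hW : ∀ᶠ s in 𝓝 (0:ℝ),
              HasDerivAt (fun r => w (L r)) (fderiv ℝ w (L s) e) s := by
            filter_upwards [hmemU] with s hs
            exact (hdiff _ hs).1.hasFDerivAt.comp_hasDerivAt s (hLder s)
          have hW2 : HasDerivAt (fun s => fderiv ℝ w (L s) e) (Hess n w z j j) 0 := by
            have h1 : DifferentiableAt ℝ
                (fun y => fderiv ℝ w y (EuclideanSpace.single j 1)) z := (hdiff z hzU').2 j
            have h1' : HasFDerivAt (fun y => fderiv ℝ w y (EuclideanSpace.single j 1))
                (fderiv ℝ (fun y => fderiv ℝ w y (EuclideanSpace.single j 1)) z) (L 0) := by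
              rw [hL0]; exact h1.hasFDerivAt
            have h2 := h1'.comp_hasDerivAt 0 (hLder 0)
            have h3 : Hess n w z j j =
                fderiv ℝ (fun y => fderiv ℝ w y (EuclideanSpace.single j 1)) z
                  (EuclideanSpace.single j 1) := rfl
            rw [h3]
            exact h2
          have finish : ∀ (Φ Φ' : ℝ → ℝ) (d : ℝ),
              (∀ᶠ s in 𝓝 (0:ℝ), HasDerivAt Φ (Φ' s) s) →
              HasDerivAt Φ' d 0 →
              (∀ s : ℝ, b (L s) = b z + (Φ s - Φ 0)) →
              Hess n w z j j ≤ d := by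
            intro Φ Φ' d hΦd hΦ'd hbline
            have hFmax : IsLocalMax (fun s => w (L s) - Φ s) 0 := by
              have h2 := hLt.eventually hloc
              filter_upwards [h2] with s hs
              have hb := hbline s
              simp only [hv_def] at hs
              simp only [hL0]
              linarith only [hb, hs]
            have hFd : ∀ᶠ s in 𝓝 (0:ℝ),
                HasDerivAt (fun r => w (L r) - Φ r) (fderiv ℝ w (L s) e - Φ' s) s := by
              filter_upwards [hW, hΦd] with s h1 h2
              exact h1.sub h2
            have hF'd : HasDerivAt (fun s => fderiv ℝ w (L s) e - Φ' s)
                (Hess n w z j j - d) 0 := hW2.sub hΦ'd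
            have := secondDerivTest hFd hF'd hFmax
            linarith only [this]
          by_cases hj : (j : ℕ) < n - 1
          · -- tangential direction
            have hjne : lastIdx n hn ≠ j := by
              intro h
              rw [h] at hlast_not
              exact hlast_not hj
            rw [if_pos hj]
            have hxlast : ∀ s : ℝ, xLast n hn (L s) = t := by
              intro s
              rw [hxL, hLcoord s (lastIdx n hn), if_neg hjne, ht_def, hxL]
              ring
            have hTline : ∀ s : ℝ, T (L s) = T z
                + (100 * (z j + s - x₀ j) ^ 2 - 100 * (z j - x₀ j) ^ 2) := by
              intro s
              have h2 : ∀ i : Fin n,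
                  (if (i : ℕ) < n - 1 then 100 * (L s i - x₀ i) ^ 2 else 0) =
                    (if (i : ℕ) < n - 1 then 100 * (z i - x₀ i) ^ 2 else 0)
                      + (if i = j then 100 * (z j + s - x₀ j) ^ 2 - 100 * (z j - x₀ j) ^ 2
                          else 0) := by
                intro i
                by_cases hij : i = j
                · subst hij
                  rw [hLcoord s i]
                  simp only [hj, if_true, eq_self_iff_true, mul_one]
                  ring
                · rw [hLcoord s i, if_neg hij, mul_zero, add_zero, if_neg hij, add_zero]
              simp only [hT_def]
              rw [Finset.sum_congr rfl fun i _ => h2 i, Finset.sum_add_distrib,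
                Finset.sum_ite_eq' Finset.univ j, if_pos (Finset.mem_univ j)]
            apply finish (fun s => 100 * (z j + s - x₀ j) ^ 2)
              (fun s => 100 * (2 * (z j + s - x₀ j))) 200
            · apply Filter.Eventually.of_forall
              intro s
              have h1 : HasDerivAt (fun r : ℝ => z j + r - x₀ j) 1 s :=
                ((hasDerivAt_id s).const_add (z j)).sub_const (x₀ j)
              have h2 := (h1.pow 2).const_mul (100:ℝ)
              convert h2 using 1
              · rfl
              · rfl
              all_goals norm_num
            · have h1 : HasDerivAt (fun r : ℝ => z j + r - x₀ j) 1 0 :=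
                ((hasDerivAt_id 0).const_add (z j)).sub_const (x₀ j)
              have h2 := (h1.const_mul (2:ℝ)).const_mul (100:ℝ)
              convert h2 using 1
              · rfl
              · rfl
              norm_num
            · intro s
              show b (L s) = b z + (100 * (z j + s - x₀ j) ^ 2 - 100 * (z j + 0 - x₀ j) ^ 2)
              simp only [hb_def]
              rw [hxlast s, hTline s, ← ht_def, add_zero]
              ring
          · -- vertical direction
            have hjeq : j = lastIdx n hn := by
              by_contra h
              exact hj (hne_last j h)
            rw [if_neg hj]
            have hxlast : ∀ s : ℝ, xLast n hn (L s) = t + s := by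
              intro s
              rw [hxL, hLcoord s (lastIdx n hn), if_pos hjeq.symm, ht_def, hxL]
              ring
            have hTline : ∀ s : ℝ, T (L s) = T z := by
              intro s
              simp only [hT_def]
              apply Finset.sum_congr rfl
              intro i _
              by_cases hi : (i : ℕ) < n - 1
              · have hij : i ≠ j := by
                  intro h
                  apply hlast_not
                  rw [← hjeq, ← h]
                  exact hi
                rw [hLcoord s i, if_neg hij, mul_zero, add_zero]
              · rw [if_neg hi, if_neg hi]
            have hposev : ∀ᶠ s in 𝓝 (0:ℝ), 0 < t + s := by
              have hc2 : Continuous fun s : ℝ => t + s := continuous_const.add continuous_id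
              have h2 : Tendsto (fun s : ℝ => t + s) (𝓝 0) (𝓝 t) := by
                have h3 := hc2.continuousAt (x := (0:ℝ))
                rwa [ContinuousAt, add_zero] at h3
              exact h2.eventually (eventually_gt_nhds hz0t)
            apply finish (fun s => K * (t + s) - c * (t + s) ^ (2 + α))
              (fun s => K - c * ((2 + α) * (t + s) ^ (1 + α)))
              (-(c * ((2 + α) * ((1 + α) * t ^ α))))
            · filter_upwards [hposev] with s hs
              have h1 : HasDerivAt (fun r : ℝ => t + r) 1 s := (hasDerivAt_id s).const_add t
              have h2 : HasDerivAt (fun r : ℝ => (t + r) ^ (2 + α))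
                  ((2 + α) * (t + s) ^ (2 + α - 1) * 1) s := by
                have hr := Real.hasDerivAt_rpow_const (x := t + s) (p := 2 + α)
                  (Or.inl (ne_of_gt hs))
                exact hr.comp s h1
              have h3 := (h1.const_mul K).sub (h2.const_mul c)
              convert h3 using 1
              · rfl
              · rfl
              · rfl
              rw [show (2:ℝ) + α - 1 = 1 + α by ring]
              ring
            · have h1 : HasDerivAt (fun r : ℝ => t + r) 1 0 := (hasDerivAt_id 0).const_add t
              have h2 : HasDerivAt (fun r : ℝ => (t + r) ^ (1 + α))
                  ((1 + α) * (t + 0) ^ (1 + α - 1) * 1) 0 := by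
                have hr := Real.hasDerivAt_rpow_const (x := t + 0) (p := 1 + α)
                  (Or.inl (by rw [add_zero]; exact ne_of_gt hz0t))
                exact hr.comp 0 h1
              have h3 := HasDerivAt.const_sub K ((h2.const_mul (2 + α)).const_mul c)
              convert h3 using 1
              · rfl
              · rfl
              rw [add_zero, show (1:ℝ) + α - 1 = α by ring]
              ring
            · intro s
              show b (L s) = b z
                + ((K * (t + s) - c * (t + s) ^ (2 + α)) - (K * (t + 0) - c * (t + 0) ^ (2 + α)))
              simp only [hb_def]
              rw [hxlast s, hTline s, ← ht_def, add_zero]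
              ring
        have hpdez := hpde z hzU'
        rw [← ht_def] at hpdez
        have hS : (∑ i : Fin n, if (i : ℕ) < n - 1 then Hess n w z i i else 0)
            ≤ 200 * n := by
          have h1 : ∀ i : Fin n, (if (i : ℕ) < n - 1 then Hess n w z i i else 0) ≤ 200 := by
            intro i
            by_cases hi : (i : ℕ) < n - 1
            · rw [if_pos hi]
              have h2 := hkey i
              rw [if_pos hi] at h2
              exact h2
            · rw [if_neg hi]; norm_num
          calc (∑ i : Fin n, if (i : ℕ) < n - 1 then Hess n w z i i else 0)
              ≤ ∑ _i : Fin n, (200:ℝ) := Finset.sum_le_sum fun i _ => h1 i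
            _ = 200 * n := by
                rw [Finset.sum_const, Finset.card_univ, Fintype.card_fin, nsmul_eq_mul]
                ring
        have hHnn := hkey (lastIdx n hn)
        rw [if_neg hlast_not] at hHnn
        have htα : 0 < t ^ α := Real.rpow_pos_of_pos hz0t α
        have h1 : t ^ α * (∑ i : Fin n, if (i : ℕ) < n - 1 then Hess n w z i i else 0)
            ≤ t ^ α * (200 * n) := mul_le_mul_of_nonneg_left hS htα.le
        have h2 : c * ((2 + α) * ((1 + α) * t ^ α))
            = (200 * n) * t ^ α + ((1 + α) * (2 + α)) * t ^ α := by
          calc c * ((2 + α) * ((1 + α) * t ^ α)) = (c * ((1 + α) * (2 + α))) * t ^ α := by ring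
            _ = (200 * n) * t ^ α + ((1 + α) * (2 + α)) * t ^ α := by rw [hcK]; ring
        have h3 : 0 < ((1 + α) * (2 + α)) * t ^ α := mul_pos hα12 htα
        linarith only [hpdez, hHnn, h1, h2, h3]
  have hx₀D : x₀ ∈ D := by
    constructor
    · exact mem_closedBall_zero_iff.2 (by linarith only [mem_ball_zero_iff.1 hx₀.1])
    · exact hx₀.2
  have hvx₀ : v x₀ ≤ v z := hzmax' x₀ hx₀D
  have hTx₀ : T x₀ = 0 := by
    simp only [hT_def, sub_self]
    simp
  have hct : 0 ≤ c * (xLast n hn x₀) ^ (2 + α) := mul_nonneg hc0.le (hrp0 _ hx₀.2)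
  have hwb : w x₀ ≤ b x₀ := by
    simp only [hv_def] at hvx₀ hvz
    linarith only [hvx₀, hvz]
  have hbx : b x₀ ≤ K * xLast n hn x₀ := by
    simp only [hb_def]
    rw [hTx₀]
    linarith only [hct]
  calc w x₀ ≤ K * xLast n hn x₀ := le_trans hwb hbx
    _ = (200 * n / ((1 + α) * (2 + α)) + 4) * xLast n hn x₀ := by
        rw [hK_def, hc_def]
        ring

/-- barrier bound `|w| ≤ C x_n` for the Grushin-type linearized equation. -/
theorem grushin_linear_growth
    (n : ℕ) (hn : 2 ≤ n) (α : ℝ) (hα : 0 < α) :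
    ∃ C : ℝ, 0 < C ∧
      ∀ w : EuclideanSpace ℝ (Fin n) → ℝ,
        ContinuousOn w (closedBall 0 1 ∩ {x | 0 ≤ xLast n hn x}) →
        (∀ x ∈ ball 0 1 ∩ {x | 0 < xLast n hn x}, TwiceDiffAt n w x) →
        (∀ x ∈ ball 0 1 ∩ {x | 0 < xLast n hn x},
          (xLast n hn x) ^ α *
              (∑ i : Fin n, if (i : ℕ) < n - 1 then Hess n w x i i else 0) +
            Hess n w x (lastIdx n hn) (lastIdx n hn) = 0) →
        (∀ x ∈ ball (0 : EuclideanSpace ℝ (Fin n)) 1, xLast n hn x = 0 → w x = 0) →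
        (∀ x ∈ ball 0 1 ∩ {x | 0 ≤ xLast n hn x}, |w x| ≤ 1) →
        ∀ x ∈ ball 0 (1 / 2) ∩ {x | 0 ≤ xLast n hn x},
          |w x| ≤ C * xLast n hn x := by
  refine ⟨200 * n / ((1 + α) * (2 + α)) + 4, ?_, ?_⟩
  · have hα12 : (0:ℝ) < (1 + α) * (2 + α) := by nlinarith only [hα]
    have h1 : (0:ℝ) ≤ 200 * n / ((1 + α) * (2 + α)) := div_nonneg (by positivity) hα12.le
    linarith only [h1]
  intro w hcont hdiff hpde hzero hbd x hx
  have h1 := oneSided n hn α hα w hcont hdiff hpde hzero hbd x hx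
  have hdiff' : ∀ y ∈ ball 0 1 ∩ {x | 0 < xLast n hn x}, TwiceDiffAt n (fun z => -w z) y := by
    intro y hy
    obtain ⟨hd1, hd2⟩ := hdiff y hy
    refine ⟨hd1.neg, fun j => ?_⟩
    have heq : (fun y => fderiv ℝ (fun z => -w z) y (EuclideanSpace.single j 1))
        = fun y => -(fderiv ℝ w y (EuclideanSpace.single j 1)) := by
      funext y
      rw [fderiv_fun_neg, ContinuousLinearMap.neg_apply]
    rw [heq]
    exact (hd2 j).neg
  have hpde' : ∀ y ∈ ball 0 1 ∩ {x | 0 < xLast n hn x},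
      (xLast n hn y) ^ α *
          (∑ i : Fin n, if (i : ℕ) < n - 1 then Hess n (fun z => -w z) y i i else 0) +
        Hess n (fun z => -w z) y (lastIdx n hn) (lastIdx n hn) = 0 := by
    intro y hy
    have hp := hpde y hy
    have hsum : (∑ i : Fin n, if (i : ℕ) < n - 1 then Hess n (fun z => -w z) y i i else 0)
        = -(∑ i : Fin n, if (i : ℕ) < n - 1 then Hess n w y i i else 0) := by
      rw [← Finset.sum_neg_distrib]
      apply Finset.sum_congr rfl
      intro i _
      rw [hess_neg]
      split <;> simp
    rw [hsum, hess_neg]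
    linarith only [hp]
  have hzero' : ∀ y ∈ ball (0 : EuclideanSpace ℝ (Fin n)) 1, xLast n hn y = 0 →
      (fun z => -w z) y = 0 := by
    intro y hy h
    simp [hzero y hy h]
  have hbd' : ∀ y ∈ ball 0 1 ∩ {x | 0 ≤ xLast n hn x}, |(fun z => -w z) y| ≤ 1 := by
    intro y hy
    simp only [abs_neg]
    exact hbd y hy
  have h2 := oneSided n hn α hα (fun z => -w z) hcont.neg hdiff' hpde' hzero' hbd' x hx
  rw [abs_le]
  constructor <;> linarith only [h1, h2]
end
end

section
/- Let n ≥ 2, let V ⊂ ℝ^{n−1} × (0, ∞) be open, and let u ∈ C²(V) be such that the tangential Hessian D²_{x′}u(x) is positive definite for every x ∈ V and the partial Legendre map P(x) = (∇_{x′}u(x), x_n) is a homeomorphism from V onto an open set W (hence, by the inverse function theorem, a C¹ diffeomorphism). Define the partial Legendre transform u*(y) = x′·∇_{x′}u(x) − u(x), where x = P^{−1}(y). Then u* is C¹ on W, twice differentiable, and for every y ∈ W, writing x = P^{−1}(y): ∇_{y′}u*(y) = x′; ∂u*/∂y_n(y) = −∂u/∂x_n(x); D²_{y′}u*(y) = (D²_{x′}u(x))^{−1};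 and −(∂²u*/∂y_n²)(y) / det D²_{y′}u*(y) = det D²u(x). In particular, if det D²u(x) = x_n^n (∂u/∂x_n(x))^{n+2} in V, then u* satisfies y_n^n (−∂u*/∂y_n)^{n+2} det D²_{y′}u* + ∂²u*/∂y_n² = 0 in W. -/
open Metric Set

noncomputable section

namespace PLT
variable {n : ℕ}

lemma sum_split (hn : 2 ≤ n) (f : Fin n → ℝ) :
    ∑ i, f i = (∑ i : Fin (n-1), f (Fin.castLE (Nat.sub_le n 1) i)) + f (lastIdx n hn) := by
  obtain ⟨m, rfl⟩ : ∃ m, n = m + 1 := ⟨n-1, by omega⟩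
  exact Fin.sum_univ_castSucc f

lemma last_not_lt (hn : 2 ≤ n) : ¬ ((lastIdx n hn : ℕ) < n - 1) := by simp [lastIdx]

lemma castLE_lt (i : Fin (n-1)) : ((Fin.castLE (Nat.sub_le n 1) i : Fin n) : ℕ) < n - 1 := i.2

lemma castLE_ne_last (hn : 2 ≤ n) (i : Fin (n-1)) :
    (Fin.castLE (Nat.sub_le n 1) i : Fin n) ≠ lastIdx n hn := by
  intro h
  have := castLE_lt i
  rw [h] at this
  exact last_not_lt hn this

lemma lt_cases (hn : 2 ≤ n) (i : Fin n) : (i : ℕ) < n - 1 ∨ i = lastIdx n hn := by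
  rcases Nat.lt_or_ge (i:ℕ) (n-1) with h | h
  · exact Or.inl h
  · exact Or.inr (Fin.ext (le_antisymm (by omega : (i:ℕ) ≤ n-1) h))

lemma clm_apply_eq_sum (L : EuclideanSpace ℝ (Fin n) →L[ℝ] ℝ) (v : EuclideanSpace ℝ (Fin n)) :
    L v = ∑ i, v i * L (EuclideanSpace.single i 1) := by
  have hv : v = ∑ i, v i • EuclideanSpace.single i (1:ℝ) := by
    ext j
    rw [show (∑ i : Fin n, v i • EuclideanSpace.single i (1:ℝ)) j
        = ∑ i : Fin n, (v i • EuclideanSpace.single i (1:ℝ)) j from by rw [WithLp.ofLp_sum, Finset.sum_apply]]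
    simp [EuclideanSpace.single_apply]
  conv_lhs => rw [hv]
  rw [map_sum]
  simp [smul_eq_mul]

lemma clm2_apply_eq_sum (L : EuclideanSpace ℝ (Fin n) →L[ℝ] (EuclideanSpace ℝ (Fin n) →L[ℝ] ℝ))
    (v w : EuclideanSpace ℝ (Fin n)) :
    L v w = ∑ i, v i * L (EuclideanSpace.single i 1) w := by
  have hv : v = ∑ i, v i • EuclideanSpace.single i (1:ℝ) := by
    ext j
    rw [show (∑ i : Fin n, v i • EuclideanSpace.single i (1:ℝ)) j
        = ∑ i : Fin n, (v i • EuclideanSpace.single i (1:ℝ)) j from by rw [WithLp.ofLp_sum, Finset.sum_apply]]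
    simp [EuclideanSpace.single_apply]
  conv_lhs => rw [hv, map_sum]
  rw [ContinuousLinearMap.sum_apply]
  simp [smul_eq_mul]

lemma toCLM_apply (M : Matrix (Fin n) (Fin n) ℝ) (v : EuclideanSpace ℝ (Fin n)) (i : Fin n) :
    (Matrix.toEuclideanCLM (𝕜 := ℝ) M v) i = ∑ k, M i k * v k := by
  have h1 := Matrix.ofLp_toEuclideanCLM (𝕜 := ℝ) M v
  have h2 : (Matrix.toEuclideanCLM (𝕜 := ℝ) M v) i
      = (WithLp.ofLp ((Matrix.toEuclideanCLM (𝕜 := ℝ) M) v)) i := rfl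
  rw [h2, h1]
  rfl

lemma single_apply' (i j : Fin n) : (EuclideanSpace.single i (1:ℝ)) j = if j = i then 1 else 0 :=
  EuclideanSpace.single_apply i 1 j

lemma toCLM_apply_single (M : Matrix (Fin n) (Fin n) ℝ) (i j : Fin n) :
    (Matrix.toEuclideanCLM (𝕜 := ℝ) M (EuclideanSpace.single j 1)) i = M i j := by
  rw [toCLM_apply]
  rw [Finset.sum_eq_single j (fun k _ hk => by rw [single_apply', if_neg hk, mul_zero])
    (fun hk => absurd (Finset.mem_univ _) hk)]
  rw [single_apply', if_pos rfl, mul_one]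

/-- The matrix of `DP` built from a Hessian-like matrix `H`. -/
def Mfrom (hn : 2 ≤ n) (H : Matrix (Fin n) (Fin n) ℝ) : Matrix (Fin n) (Fin n) ℝ :=
  Matrix.of fun i k => if (i : ℕ) < n - 1 then H i k else if k = lastIdx n hn then 1 else 0

section Mat
variable (hn : 2 ≤ n) (H N : Matrix (Fin n) (Fin n) ℝ)

lemma Nrow_last (hMN : Mfrom hn H * N = 1) (j : Fin n) :
    N (lastIdx n hn) j = if lastIdx n hn = j then 1 else 0 := by
  have h := congrFun (congrFun hMN (lastIdx n hn)) j
  rw [Matrix.mul_apply] at h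
  simp only [Mfrom, Matrix.of_apply, last_not_lt hn, if_false] at h
  rw [Finset.sum_eq_single (lastIdx n hn)
    (fun k _ hk => by rw [if_neg hk, zero_mul])
    (fun hk => absurd (Finset.mem_univ _) hk)] at h
  simp only [if_true, if_pos rfl, one_mul] at h
  rw [h, Matrix.one_apply]

lemma block_mul_one (hMN : Mfrom hn H * N = 1) :
    (Matrix.of fun i j : Fin (n-1) => H (Fin.castLE (Nat.sub_le n 1) i) (Fin.castLE (Nat.sub_le n 1) j)) *
    (Matrix.of fun i j : Fin (n-1) => N (Fin.castLE (Nat.sub_le n 1) i) (Fin.castLE (Nat.sub_le n 1) j)) = 1 := by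
  ext i j
  rw [Matrix.mul_apply]
  simp only [Matrix.of_apply]
  have h := congrFun (congrFun hMN (Fin.castLE (Nat.sub_le n 1) i)) (Fin.castLE (Nat.sub_le n 1) j)
  rw [Matrix.mul_apply] at h
  rw [sum_split hn (fun k => Mfrom hn H (Fin.castLE (Nat.sub_le n 1) i) k * N k (Fin.castLE (Nat.sub_le n 1) j))] at h
  rw [Nrow_last hn H N hMN, if_neg (Ne.symm (castLE_ne_last hn j))] at h
  simp only [Mfrom, Matrix.of_apply, castLE_lt, if_true, mul_zero, add_zero] at h
  rw [h, Matrix.one_apply, Matrix.one_apply]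
  simp [Fin.castLE_inj]

lemma det_key (hMN : Mfrom hn H * N = 1) (hsymm : ∀ i j, H i j = H j i) :
    H.det * N.det = ∑ k, H k (lastIdx n hn) * N k (lastIdx n hn) := by
  set ν := lastIdx n hn with hν
  set v : Fin n → ℝ := fun j => (∑ k, H ν k * N k j) - (if ν = j then 1 else 0) with hv
  have hHN : H * N = 1 + Matrix.replicateCol (Fin 1) (fun i => if i = ν then (1:ℝ) else 0) *
      Matrix.replicateRow (Fin 1) v := by
    ext i j
    rw [Matrix.mul_apply]
    rcases eq_or_ne i ν with rfl | hi
    · simp [Matrix.mul_apply, Matrix.one_apply, hv]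
    · have hlt : (i : ℕ) < n - 1 := by
        rcases lt_cases hn i with h | h
        · exact h
        · exact absurd h hi
      have h := congrFun (congrFun hMN i) j
      rw [Matrix.mul_apply] at h
      simp only [Mfrom, Matrix.of_apply, hlt, if_true] at h
      rw [h]
      simp [Matrix.mul_apply, Matrix.one_apply, hi]
  have hdet := congrArg Matrix.det hHN
  rw [Matrix.det_mul] at hdet
  replace hdet := hdet.trans (Matrix.det_one_add_replicateCol_mul_replicateRow (ι := Fin 1)
    (fun i => if i = ν then (1:ℝ) else 0) v)
  have hdp : dotProduct v (fun i => if i = ν then (1:ℝ) else 0) = v ν := by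
    rw [dotProduct]
    rw [Finset.sum_eq_single ν (fun k _ hk => by rw [if_neg hk, mul_zero])
      (fun hk => absurd (Finset.mem_univ _) hk)]
    simp
  rw [hdp] at hdet
  have hvν : v ν = (∑ k, H k ν * N k ν) - 1 := by
    simp only [hv, if_pos rfl]
    rw [Finset.sum_congr rfl (fun k _ => by rw [hsymm ν k])]
    norm_num
  rw [hdet, hvν]; ring

lemma det_N_block (hMN : Mfrom hn H * N = 1) :
    N.det = (Matrix.of fun i j : Fin (n-1) =>
      N (Fin.castLE (Nat.sub_le n 1) i) (Fin.castLE (Nat.sub_le n 1) j)).det := by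
  have hplus : n - 1 + 1 = n := by omega
  set σ : Fin (n-1) ⊕ Fin 1 ≃ Fin n := finSumFinEquiv.trans (finCongr hplus) with hσ
  have hσl : ∀ i : Fin (n-1), σ (Sum.inl i) = Fin.castLE (Nat.sub_le n 1) i := by
    intro i; apply Fin.ext; simp [hσ]
  have hσr : σ (Sum.inr 0) = lastIdx n hn := by
    apply Fin.ext; simp [hσ, lastIdx]
  have hre : Matrix.reindex σ.symm σ.symm N = Matrix.fromBlocks
      (Matrix.of fun i j : Fin (n-1) =>
        N (Fin.castLE (Nat.sub_le n 1) i) (Fin.castLE (Nat.sub_le n 1) j))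
      (Matrix.of fun (i : Fin (n-1)) (_ : Fin 1) => N (Fin.castLE (Nat.sub_le n 1) i) (lastIdx n hn))
      0 1 := by
    ext i j
    rcases i with i | i <;> rcases j with j | j
    · simp [Matrix.reindex_apply, Matrix.submatrix_apply, hσl]
    · simp [Matrix.reindex_apply, Matrix.submatrix_apply, hσl, hσr, Fin.eq_zero j]
    · simp [Matrix.reindex_apply, Matrix.submatrix_apply, hσl, hσr, Fin.eq_zero i,
        Nrow_last hn H N hMN, Ne.symm (castLE_ne_last hn j)]
    · simp [Matrix.reindex_apply, Matrix.submatrix_apply, hσr, Fin.eq_zero i, Fin.eq_zero j,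
        Nrow_last hn H N hMN, Matrix.one_apply]
  have hdet := congrArg Matrix.det hre
  rw [Matrix.det_reindex_self, Matrix.det_fromBlocks_zero₂₁, Matrix.det_one, mul_one] at hdet
  exact hdet

lemma det_M_block :
    (Mfrom hn H).det = (Matrix.of fun i j : Fin (n-1) =>
      H (Fin.castLE (Nat.sub_le n 1) i) (Fin.castLE (Nat.sub_le n 1) j)).det := by
  have hplus : n - 1 + 1 = n := by omega
  set σ : Fin (n-1) ⊕ Fin 1 ≃ Fin n := finSumFinEquiv.trans (finCongr hplus) with hσ
  have hσl : ∀ i : Fin (n-1), σ (Sum.inl i) = Fin.castLE (Nat.sub_le n 1) i := by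
    intro i; apply Fin.ext; simp [hσ]
  have hσr : σ (Sum.inr 0) = lastIdx n hn := by
    apply Fin.ext; simp [hσ, lastIdx]
  have hre : Matrix.reindex σ.symm σ.symm (Mfrom hn H) = Matrix.fromBlocks
      (Matrix.of fun i j : Fin (n-1) =>
        H (Fin.castLE (Nat.sub_le n 1) i) (Fin.castLE (Nat.sub_le n 1) j))
      (Matrix.of fun (i : Fin (n-1)) (_ : Fin 1) => H (Fin.castLE (Nat.sub_le n 1) i) (lastIdx n hn))
      0 1 := by
    ext i j
    rcases i with i | i <;> rcases j with j | j
    · simp [Matrix.reindex_apply, Matrix.submatrix_apply, hσl, Mfrom, castLE_lt]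
    · simp [Matrix.reindex_apply, Matrix.submatrix_apply, hσl, hσr, Fin.eq_zero j, Mfrom, castLE_lt]
    · simp [Matrix.reindex_apply, Matrix.submatrix_apply, hσl, hσr, Fin.eq_zero i, Mfrom,
        last_not_lt hn, castLE_ne_last hn j]
    · simp [Matrix.reindex_apply, Matrix.submatrix_apply, hσr, Fin.eq_zero i, Fin.eq_zero j, Mfrom,
        last_not_lt hn, Matrix.one_apply]
  have hdet := congrArg Matrix.det hre
  rw [Matrix.det_reindex_self, Matrix.det_fromBlocks_zero₂₁, Matrix.det_one, mul_one] at hdet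
  exact hdet

end Mat

lemma block_det_pos (hn : 2 ≤ n) (H : Matrix (Fin n) (Fin n) ℝ)
    (hsymm : ∀ i j, H i j = H j i)
    (hpos : ∀ ξ : EuclideanSpace ℝ (Fin n), ξ (lastIdx n hn) = 0 → ξ ≠ 0 →
      0 < ∑ i, ∑ j, H i j * ξ i * ξ j) :
    0 < (Matrix.of fun i j : Fin (n-1) =>
      H (Fin.castLE (Nat.sub_le n 1) i) (Fin.castLE (Nat.sub_le n 1) j)).det := by
  set A : Matrix (Fin (n-1)) (Fin (n-1)) ℝ := Matrix.of fun i j =>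
    H (Fin.castLE (Nat.sub_le n 1) i) (Fin.castLE (Nat.sub_le n 1) j) with hA
  have : A.PosDef := by
    refine Matrix.PosDef.of_dotProduct_mulVec_pos ?_ ?_
    · apply Matrix.IsHermitian.ext
      intro i j
      simp [hA, hsymm]
    · intro x hx
      set ξ : EuclideanSpace ℝ (Fin n) :=
        (WithLp.equiv 2 (Fin n → ℝ)).symm
          (fun i => if h : (i:ℕ) < n - 1 then x ⟨i.1, h⟩ else 0) with hξ
      have hξapp : ∀ i : Fin n, ξ i = if h : (i:ℕ) < n - 1 then x ⟨i.1, h⟩ else 0 := fun i => rfl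
      have hξc : ∀ i : Fin (n-1), ξ (Fin.castLE (Nat.sub_le n 1) i) = x i := by
        intro i
        rw [hξapp, dif_pos (castLE_lt i)]
        exact congrArg x (Fin.ext rfl)
      have hξν : ξ (lastIdx n hn) = 0 := by
        rw [hξapp, dif_neg (last_not_lt hn)]
      have hξ0 : ξ ≠ 0 := by
        obtain ⟨j, hj⟩ := Function.ne_iff.mp hx
        intro h0
        apply hj
        rw [← hξc j, h0]
        rfl
      have key := hpos ξ hξν hξ0
      rw [sum_split hn] at key
      rw [Finset.sum_congr rfl (fun i (_ : i ∈ Finset.univ) => sum_split hn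
        (fun j => H (Fin.castLE (Nat.sub_le n 1) i) j * ξ (Fin.castLE (Nat.sub_le n 1) i) * ξ j))] at key
      simp only [hξν, hξc, mul_zero, add_zero] at key
      simp only [hξν, zero_mul, Finset.sum_const_zero, add_zero] at key
      calc (0:ℝ) < ∑ i : Fin (n-1), ∑ j : Fin (n-1),
            H (Fin.castLE (Nat.sub_le n 1) i) (Fin.castLE (Nat.sub_le n 1) j) * x i * x j := key
        _ = dotProduct (star x) (A.mulVec x) := by
            rw [dotProduct]
            apply Finset.sum_congr rfl
            intro i _
            rw [Matrix.mulVec, dotProduct, star_trivial, Finset.mul_sum]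
            apply Finset.sum_congr rfl
            intro j _
            simp only [hA, Matrix.of_apply]
            ring
  exact this.det_pos

section Analytic
variable (u : EuclideanSpace ℝ (Fin n) → ℝ) (x : EuclideanSpace ℝ (Fin n))

lemma hasFDerivAt_partial (hd2 : DifferentiableAt ℝ (fderiv ℝ u) x) (j : Fin n) :
    HasFDerivAt (fun z => fderiv ℝ u z (EuclideanSpace.single j 1))
      ((ContinuousLinearMap.apply ℝ ℝ (EuclideanSpace.single j (1:ℝ))).comp
        (fderiv ℝ (fderiv ℝ u) x)) x :=
  ((ContinuousLinearMap.apply ℝ ℝ (EuclideanSpace.single j (1:ℝ))).hasFDerivAt).comp x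
    hd2.hasFDerivAt

lemma hess_eq (hd2 : DifferentiableAt ℝ (fderiv ℝ u) x) (i j : Fin n) :
    Hess n u x i j
      = fderiv ℝ (fderiv ℝ u) x (EuclideanSpace.single i 1) (EuclideanSpace.single j 1) := by
  have h : fderiv ℝ (fun z => fderiv ℝ u z (EuclideanSpace.single j 1)) x
      = (ContinuousLinearMap.apply ℝ ℝ (EuclideanSpace.single j (1:ℝ))).comp
        (fderiv ℝ (fderiv ℝ u) x) := (hasFDerivAt_partial u x hd2 j).fderiv
  show fderiv ℝ (fun z => fderiv ℝ u z (EuclideanSpace.single j 1)) x (EuclideanSpace.single i 1) = _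
  rw [h]
  rfl

lemma hasFDerivAt_P (hn : 2 ≤ n) (P : EuclideanSpace ℝ (Fin n) → EuclideanSpace ℝ (Fin n))
    (hP : ∀ z, P z = (EuclideanSpace.equiv (Fin n) ℝ).symm
      (fun i => if (i : ℕ) < n - 1 then fderiv ℝ u z (EuclideanSpace.single i 1)
        else xLast n hn z))
    (hd2 : DifferentiableAt ℝ (fderiv ℝ u) x)
    (hsymm : ∀ v w, fderiv ℝ (fderiv ℝ u) x v w = fderiv ℝ (fderiv ℝ u) x w v) :
    HasFDerivAt P (Matrix.toEuclideanCLM (𝕜 := ℝ) (Mfrom hn (Hess n u x))) x := by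
  have hPfun : P = fun z => (EuclideanSpace.equiv (Fin n) ℝ).symm
      (fun i => if (i : ℕ) < n - 1 then fderiv ℝ u z (EuclideanSpace.single i 1)
        else xLast n hn z) := funext hP
  rw [hPfun]
  set D := Matrix.toEuclideanCLM (𝕜 := ℝ) (Mfrom hn (Hess n u x)) with hD
  set φ : EuclideanSpace ℝ (Fin n) ≃L[ℝ] (Fin n → ℝ) :=
    PiLp.continuousLinearEquiv 2 ℝ (fun _ : Fin n => ℝ) with hφ
  rw [← φ.comp_hasFDerivAt_iff]
  apply hasFDerivAt_pi''
  intro i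
  rcases lt_cases hn i with hi | hi
  · have base := hasFDerivAt_partial u x hd2 i
    have heq : (ContinuousLinearMap.proj i).comp ((φ : EuclideanSpace ℝ (Fin n) →L[ℝ] (Fin n → ℝ)).comp D)
        = (ContinuousLinearMap.apply ℝ ℝ (EuclideanSpace.single i (1:ℝ))).comp
          (fderiv ℝ (fderiv ℝ u) x) := by
      apply ContinuousLinearMap.ext
      intro v
      show (D v) i = fderiv ℝ (fderiv ℝ u) x v (EuclideanSpace.single i 1)
      rw [hD, toCLM_apply, clm2_apply_eq_sum]
      apply Finset.sum_congr rfl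
      intro k _
      rw [Mfrom, Matrix.of_apply, if_pos hi, hess_eq u x hd2, hsymm]
      ring
    rw [heq]
    have hfun : (fun z => (⇑φ ∘ fun z => (EuclideanSpace.equiv (Fin n) ℝ).symm
        (fun i => if (i : ℕ) < n - 1 then fderiv ℝ u z (EuclideanSpace.single i 1)
          else xLast n hn z)) z i)
        = fun z => fderiv ℝ u z (EuclideanSpace.single i 1) := by
      funext z
      show (if (i : ℕ) < n - 1 then fderiv ℝ u z (EuclideanSpace.single i 1) else xLast n hn z) = _
      rw [if_pos hi]
    exact hfun ▸ base
  · subst hi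
    have base : HasFDerivAt (fun z : EuclideanSpace ℝ (Fin n) => z (lastIdx n hn))
        (EuclideanSpace.proj (lastIdx n hn) : EuclideanSpace ℝ (Fin n) →L[ℝ] ℝ) x :=
      (EuclideanSpace.proj (lastIdx n hn) : EuclideanSpace ℝ (Fin n) →L[ℝ] ℝ).hasFDerivAt
    have heq : (ContinuousLinearMap.proj (lastIdx n hn)).comp
        ((φ : EuclideanSpace ℝ (Fin n) →L[ℝ] (Fin n → ℝ)).comp D)
        = (EuclideanSpace.proj (lastIdx n hn) : EuclideanSpace ℝ (Fin n) →L[ℝ] ℝ) := by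
      apply ContinuousLinearMap.ext
      intro v
      show (D v) (lastIdx n hn) = v (lastIdx n hn)
      rw [hD, toCLM_apply]
      rw [Finset.sum_eq_single (lastIdx n hn) (fun k _ hk => by
          rw [Mfrom, Matrix.of_apply, if_neg (last_not_lt hn), if_neg hk, zero_mul])
        (fun hk => absurd (Finset.mem_univ _) hk)]
      rw [Mfrom, Matrix.of_apply, if_neg (last_not_lt hn), if_pos rfl, one_mul]
    rw [heq]
    have hfun : (fun z => (⇑φ ∘ fun z => (EuclideanSpace.equiv (Fin n) ℝ).symm
        (fun i => if (i : ℕ) < n - 1 then fderiv ℝ u z (EuclideanSpace.single i 1)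
          else xLast n hn z)) z (lastIdx n hn))
        = fun z : EuclideanSpace ℝ (Fin n) => z (lastIdx n hn) := by
      funext z
      show (if ((lastIdx n hn : Fin n) : ℕ) < n - 1
          then fderiv ℝ u z (EuclideanSpace.single (lastIdx n hn) 1) else xLast n hn z) = _
      rw [if_neg (last_not_lt hn)]
      rfl
    exact hfun ▸ base

end Analytic

/-- The first derivative of the partial Legendre transform. -/
def Gmap (n : ℕ) (hn : 2 ≤ n) (u : EuclideanSpace ℝ (Fin n) → ℝ)
    (Pinv : EuclideanSpace ℝ (Fin n) → EuclideanSpace ℝ (Fin n)) (y : EuclideanSpace ℝ (Fin n)) :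
    EuclideanSpace ℝ (Fin n) →L[ℝ] ℝ :=
  (∑ i : Fin n, if (i : ℕ) < n - 1 then Pinv y i • (EuclideanSpace.proj i :
      EuclideanSpace ℝ (Fin n) →L[ℝ] ℝ) else 0)
    - (fderiv ℝ u (Pinv y) (EuclideanSpace.single (lastIdx n hn) 1)) •
        (EuclideanSpace.proj (lastIdx n hn) : EuclideanSpace ℝ (Fin n) →L[ℝ] ℝ)

lemma Gmap_apply (hn : 2 ≤ n) (u : EuclideanSpace ℝ (Fin n) → ℝ)
    (Pinv : EuclideanSpace ℝ (Fin n) → EuclideanSpace ℝ (Fin n))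
    (y v : EuclideanSpace ℝ (Fin n)) :
    Gmap n hn u Pinv y v = (∑ i : Fin n, if (i : ℕ) < n - 1 then Pinv y i * v i else 0)
      - fderiv ℝ u (Pinv y) (EuclideanSpace.single (lastIdx n hn) 1) * v (lastIdx n hn) := by
  rw [Gmap, ContinuousLinearMap.sub_apply, ContinuousLinearMap.sum_apply,
    ContinuousLinearMap.smul_apply]
  congr 1
  apply Finset.sum_congr rfl
  intro i _
  rw [apply_ite (fun L : EuclideanSpace ℝ (Fin n) →L[ℝ] ℝ => L v)]
  simp

lemma Gmap_single (hn : 2 ≤ n) (u : EuclideanSpace ℝ (Fin n) → ℝ)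
    (Pinv : EuclideanSpace ℝ (Fin n) → EuclideanSpace ℝ (Fin n))
    (y : EuclideanSpace ℝ (Fin n)) (j : Fin n) :
    Gmap n hn u Pinv y (EuclideanSpace.single j 1)
      = if (j : ℕ) < n - 1 then Pinv y j
        else -(fderiv ℝ u (Pinv y) (EuclideanSpace.single (lastIdx n hn) 1)) := by
  rw [Gmap_apply]
  have h1 : (∑ i : Fin n, if (i : ℕ) < n - 1
      then Pinv y i * (EuclideanSpace.single j (1:ℝ)) i else 0)
      = if (j : ℕ) < n - 1 then Pinv y j else 0 := by
    rw [Finset.sum_eq_single j (fun k _ hk => by simp [single_apply', hk])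
      (fun hk => absurd (Finset.mem_univ _) hk)]
    simp [single_apply']
  rw [h1]
  rcases lt_cases hn j with hj | hj
  · rw [if_pos hj, if_pos hj, single_apply',
      if_neg (fun h : lastIdx n hn = j => last_not_lt hn (h ▸ hj)), mul_zero, sub_zero]
  · subst hj
    rw [if_neg (last_not_lt hn), if_neg (last_not_lt hn), single_apply', if_pos rfl, mul_one,
      zero_sub]

end PLT

/-- Section 5.2, properties of the partial Legendre transform. -/
theorem partial_legendre_transform
    (n : ℕ) (hn : 2 ≤ n)
    (V W : Set (EuclideanSpace ℝ (Fin n)))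
    (hV : IsOpen V) (hVsub : V ⊆ {x | 0 < xLast n hn x}) (hW : IsOpen W)
    (u : EuclideanSpace ℝ (Fin n) → ℝ)
    (hu : ContDiffOn ℝ 2 u V)
    (hposdef : ∀ x ∈ V, ∀ ξ : EuclideanSpace ℝ (Fin n), ξ (lastIdx n hn) = 0 → ξ ≠ 0 →
      0 < ∑ i, ∑ j, Hess n u x i j * ξ i * ξ j)
    -- the partial Legendre map `P(x) = (∇_{x′}u(x), x_n)` and its inverse
    (P Pinv : EuclideanSpace ℝ (Fin n) → EuclideanSpace ℝ (Fin n))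
    (hP : ∀ x, P x = (EuclideanSpace.equiv (Fin n) ℝ).symm
      (fun i => if (i : ℕ) < n - 1 then fderiv ℝ u x (EuclideanSpace.single i 1)
        else xLast n hn x))
    (hbij : Set.BijOn P V W)
    (hinv : Set.InvOn Pinv P V W)
    (hPinv_cont : ContinuousOn Pinv W)
    -- the partial Legendre transform `u*`
    (ustar : EuclideanSpace ℝ (Fin n) → ℝ)
    (hustar : ∀ y, ustar y =
      (∑ i : Fin n, if (i : ℕ) < n - 1
        then Pinv y i * fderiv ℝ u (Pinv y) (EuclideanSpace.single i 1) else 0)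
      - u (Pinv y)) :
    -- `u*` is `C¹` on `W` and twice differentiable there
    (∀ y ∈ W, TwiceDiffAt n ustar y) ∧
    ContinuousOn (fderiv ℝ ustar) W ∧
    (∀ y ∈ W,
      -- tangential gradient: `∇_{y′}u*(y) = x′`
      (∀ i : Fin n, (i : ℕ) < n - 1 →
        fderiv ℝ ustar y (EuclideanSpace.single i 1) = Pinv y i) ∧
      -- normal derivative: `u*_n(y) = −u_n(x)`
      fderiv ℝ ustar y (EuclideanSpace.single (lastIdx n hn) 1)
        = - fderiv ℝ u (Pinv y) (EuclideanSpace.single (lastIdx n hn) 1) ∧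
      -- `D²_{y′}u*(y) = (D²_{x′}u(x))⁻¹` and `−u*_{nn}/det D²_{y′}u* = det D²u`
      (∀ Mx My : Matrix (Fin (n - 1)) (Fin (n - 1)) ℝ,
        Mx = Matrix.of (fun i j => Hess n u (Pinv y)
          (Fin.castLE (Nat.sub_le n 1) i) (Fin.castLE (Nat.sub_le n 1) j)) →
        My = Matrix.of (fun i j => Hess n ustar y
          (Fin.castLE (Nat.sub_le n 1) i) (Fin.castLE (Nat.sub_le n 1) j)) →
        My * Mx = 1 ∧ Mx * My = 1 ∧
        - Hess n ustar y (lastIdx n hn) (lastIdx n hn)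
          = (Hess n u (Pinv y)).det * My.det)) ∧
    -- in particular: the transformed eigenvalue-type equation
    ((∀ x ∈ V, (Hess n u x).det
        = (xLast n hn x) ^ n * (fderiv ℝ u x (EuclideanSpace.single (lastIdx n hn) 1)) ^ (n + 2)) →
      ∀ y ∈ W,
        (xLast n hn y) ^ n *
            (- fderiv ℝ ustar y (EuclideanSpace.single (lastIdx n hn) 1)) ^ (n + 2) *
            (Matrix.of (fun i j : Fin (n - 1) => Hess n ustar y
              (Fin.castLE (Nat.sub_le n 1) i) (Fin.castLE (Nat.sub_le n 1) j))).det +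
          Hess n ustar y (lastIdx n hn) (lastIdx n hn) = 0) := by
  classical
  have hVd : ∀ x ∈ V, DifferentiableAt ℝ u x := fun x hx =>
    ((hu.differentiableOn (by norm_num)).differentiableAt (hV.mem_nhds hx))
  have hC1 : ContDiffOn ℝ 1 (fderiv ℝ u) V := hu.fderiv_of_isOpen hV (by norm_num)
  have hVd2 : ∀ x ∈ V, DifferentiableAt ℝ (fderiv ℝ u) x := fun x hx =>
    ((hC1.differentiableOn (by norm_num)).differentiableAt (hV.mem_nhds hx))
  have hsymm : ∀ x ∈ V, ∀ v w, fderiv ℝ (fderiv ℝ u) x v w = fderiv ℝ (fderiv ℝ u) x w v := by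
    intro x hx v w
    exact second_derivative_symmetric_of_eventually
      ((hV.eventually_mem hx).mono (fun z hz => (hVd z hz).hasFDerivAt))
      (hVd2 x hx).hasFDerivAt v w
  have hHsymm : ∀ x ∈ V, ∀ i j, Hess n u x i j = Hess n u x j i := fun x hx i j => by
    rw [PLT.hess_eq u x (hVd2 x hx), PLT.hess_eq u x (hVd2 x hx), hsymm x hx]
  have hPinvV : ∀ y ∈ W, Pinv y ∈ V := by
    intro y hy
    obtain ⟨x, hxV, hPx⟩ := hbij.surjOn hy
    rw [← hPx, hinv.1 hxV]
    exact hxV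
  have hPapp : ∀ z, ∀ i : Fin n, P z i
      = if (i:ℕ) < n - 1 then fderiv ℝ u z (EuclideanSpace.single i 1)
        else z (lastIdx n hn) := by
    intro z i; rw [hP]; rfl
  have hgrad : ∀ y ∈ W, ∀ i : Fin n, (i:ℕ) < n - 1 →
      fderiv ℝ u (Pinv y) (EuclideanSpace.single i 1) = y i := by
    intro y hy i hi
    have h := congrArg (fun v : EuclideanSpace ℝ (Fin n) => v i) (hinv.2 hy)
    simp only at h
    rw [hPapp, if_pos hi] at h
    exact h
  have hlast : ∀ y ∈ W, Pinv y (lastIdx n hn) = y (lastIdx n hn) := by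
    intro y hy
    have h := congrArg (fun v : EuclideanSpace ℝ (Fin n) => v (lastIdx n hn)) (hinv.2 hy)
    simp only at h
    rw [hPapp, if_neg (PLT.last_not_lt hn)] at h
    exact h
  have hdetM : ∀ x ∈ V, IsUnit (PLT.Mfrom hn (Hess n u x)).det := by
    intro x hx
    rw [PLT.det_M_block hn]
    exact (PLT.block_det_pos hn _ (hHsymm x hx) (hposdef x hx)).ne'.isUnit
  have hMN : ∀ y ∈ W, PLT.Mfrom hn (Hess n u (Pinv y)) * (PLT.Mfrom hn (Hess n u (Pinv y)))⁻¹ = 1 :=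
    fun y hy => Matrix.mul_nonsing_inv _ (hdetM _ (hPinvV y hy))
  have hNM : ∀ y ∈ W, (PLT.Mfrom hn (Hess n u (Pinv y)))⁻¹ * PLT.Mfrom hn (Hess n u (Pinv y)) = 1 :=
    fun y hy => Matrix.nonsing_inv_mul _ (hdetM _ (hPinvV y hy))
  -- derivative of the inverse map
  have hDPinv : ∀ y ∈ W, HasFDerivAt Pinv
      (Matrix.toEuclideanCLM (𝕜 := ℝ) (PLT.Mfrom hn (Hess n u (Pinv y)))⁻¹) y := by
    intro y hy
    have hx := hPinvV y hy
    have h1 : Function.LeftInverse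
        (Matrix.toEuclideanCLM (𝕜 := ℝ) (PLT.Mfrom hn (Hess n u (Pinv y)))⁻¹)
        (Matrix.toEuclideanCLM (𝕜 := ℝ) (PLT.Mfrom hn (Hess n u (Pinv y)))) := by
      intro v
      rw [← ContinuousLinearMap.mul_apply, ← map_mul, hNM y hy, map_one,
        ContinuousLinearMap.one_apply]
    have h2 : Function.RightInverse
        (Matrix.toEuclideanCLM (𝕜 := ℝ) (PLT.Mfrom hn (Hess n u (Pinv y)))⁻¹)
        (Matrix.toEuclideanCLM (𝕜 := ℝ) (PLT.Mfrom hn (Hess n u (Pinv y)))) := by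
      intro v
      rw [← ContinuousLinearMap.mul_apply, ← map_mul, hMN y hy, map_one,
        ContinuousLinearMap.one_apply]
    set eqv : EuclideanSpace ℝ (Fin n) ≃L[ℝ] EuclideanSpace ℝ (Fin n) :=
      ContinuousLinearEquiv.equivOfInverse _ _ h1 h2 with heqv
    have hPder : HasFDerivAt P (eqv : EuclideanSpace ℝ (Fin n) →L[ℝ] EuclideanSpace ℝ (Fin n))
        (Pinv y) :=
      PLT.hasFDerivAt_P u (Pinv y) hn P hP (hVd2 _ hx) (hsymm _ hx)
    have key := HasFDerivAt.of_local_left_inverse (hPinv_cont.continuousAt (hW.mem_nhds hy))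
      hPder ((hW.eventually_mem hy).mono (fun z hz => hinv.2 hz))
    exact key
  -- first derivative of ustar
  have hust : ∀ y ∈ W, HasFDerivAt ustar (PLT.Gmap n hn u Pinv y) y := by
    intro y hy
    have hx := hPinvV y hy
    set Ncl := Matrix.toEuclideanCLM (𝕜 := ℝ) (PLT.Mfrom hn (Hess n u (Pinv y)))⁻¹ with hNcl
    have hNlast : ∀ v, (Ncl v) (lastIdx n hn) = v (lastIdx n hn) := by
      intro v
      rw [hNcl, PLT.toCLM_apply]
      rw [Finset.sum_eq_single (lastIdx n hn)
        (fun k _ hk => by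
          rw [PLT.Nrow_last hn _ _ (hMN y hy), if_neg (fun h => hk h.symm), zero_mul])
        (fun hk => absurd (Finset.mem_univ _) hk)]
      rw [PLT.Nrow_last hn _ _ (hMN y hy), if_pos rfl, one_mul]
    have hFder : HasFDerivAt
        (fun z => (∑ i : Fin n, if (i:ℕ) < n - 1 then Pinv z i * z i else 0) - u (Pinv z))
        ((∑ i : Fin n, if (i:ℕ) < n - 1 then
            (Pinv y i • (EuclideanSpace.proj i : EuclideanSpace ℝ (Fin n) →L[ℝ] ℝ)
              + y i • ((EuclideanSpace.proj i : EuclideanSpace ℝ (Fin n) →L[ℝ] ℝ).comp Ncl))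
          else 0)
          - (fderiv ℝ u (Pinv y)).comp Ncl) y := by
      apply HasFDerivAt.sub
      · apply HasFDerivAt.fun_sum
        intro i _
        by_cases hi : (i:ℕ) < n - 1
        · simp only [if_pos hi]
          exact ((EuclideanSpace.proj i : EuclideanSpace ℝ (Fin n) →L[ℝ] ℝ).hasFDerivAt.comp y
            (hDPinv y hy)).mul
            (EuclideanSpace.proj i : EuclideanSpace ℝ (Fin n) →L[ℝ] ℝ).hasFDerivAt
        · simp only [if_neg hi]
          exact hasFDerivAt_const 0 y
      · exact (hVd _ hx).hasFDerivAt.comp y (hDPinv y hy)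
    have hDeq : (∑ i : Fin n, if (i:ℕ) < n - 1 then
            (Pinv y i • (EuclideanSpace.proj i : EuclideanSpace ℝ (Fin n) →L[ℝ] ℝ)
              + y i • ((EuclideanSpace.proj i : EuclideanSpace ℝ (Fin n) →L[ℝ] ℝ).comp Ncl))
          else 0) - (fderiv ℝ u (Pinv y)).comp Ncl = PLT.Gmap n hn u Pinv y := by
      apply ContinuousLinearMap.ext
      intro v
      rw [ContinuousLinearMap.sub_apply, ContinuousLinearMap.sum_apply, PLT.Gmap_apply]
      have e1 : ∀ i : Fin n, (if (i:ℕ) < n - 1 then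
            (Pinv y i • (EuclideanSpace.proj i : EuclideanSpace ℝ (Fin n) →L[ℝ] ℝ)
              + y i • ((EuclideanSpace.proj i : EuclideanSpace ℝ (Fin n) →L[ℝ] ℝ).comp Ncl))
          else (0 : EuclideanSpace ℝ (Fin n) →L[ℝ] ℝ)) v
          = if (i:ℕ) < n - 1 then Pinv y i * v i + y i * (Ncl v) i else 0 := by
        intro i
        rw [apply_ite (fun L : EuclideanSpace ℝ (Fin n) →L[ℝ] ℝ => L v)]
        split
        · rw [ContinuousLinearMap.add_apply, ContinuousLinearMap.smul_apply,
            ContinuousLinearMap.smul_apply, ContinuousLinearMap.comp_apply]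
          rfl
        · rfl
      rw [Finset.sum_congr rfl (fun i _ => e1 i)]
      have e2 : ContinuousLinearMap.comp (fderiv ℝ u (Pinv y)) Ncl v
          = (∑ i : Fin (n-1), (Ncl v) (Fin.castLE (Nat.sub_le n 1) i)
              * y (Fin.castLE (Nat.sub_le n 1) i))
            + v (lastIdx n hn)
              * fderiv ℝ u (Pinv y) (EuclideanSpace.single (lastIdx n hn) 1) := by
        rw [ContinuousLinearMap.comp_apply, PLT.clm_apply_eq_sum (fderiv ℝ u (Pinv y)) (Ncl v),
          PLT.sum_split hn, hNlast]
        congr 1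
        apply Finset.sum_congr rfl
        intro i _
        rw [hgrad y hy _ (PLT.castLE_lt i)]
      rw [e2]
      have e3 : (∑ i : Fin n, if (i:ℕ) < n - 1 then Pinv y i * v i + y i * (Ncl v) i else 0)
          = (∑ i : Fin (n-1), Pinv y (Fin.castLE (Nat.sub_le n 1) i) * v (Fin.castLE (Nat.sub_le n 1) i))
            + ∑ i : Fin (n-1), (Ncl v) (Fin.castLE (Nat.sub_le n 1) i) * y (Fin.castLE (Nat.sub_le n 1) i) := by
        rw [PLT.sum_split hn, if_neg (PLT.last_not_lt hn), add_zero,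
          Finset.sum_congr rfl (fun i (_ : i ∈ Finset.univ) => if_pos (PLT.castLE_lt i)),
          Finset.sum_add_distrib]
        congr 1
        apply Finset.sum_congr rfl
        intro i _
        ring
      have e4 : (∑ i : Fin n, if (i:ℕ) < n - 1 then Pinv y i * v i else 0)
          = ∑ i : Fin (n-1), Pinv y (Fin.castLE (Nat.sub_le n 1) i) * v (Fin.castLE (Nat.sub_le n 1) i) := by
        rw [PLT.sum_split hn, if_neg (PLT.last_not_lt hn), add_zero,
          Finset.sum_congr rfl (fun i (_ : i ∈ Finset.univ) => if_pos (PLT.castLE_lt i))]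
      rw [e3, e4]
      ring
    have hev : (fun z => (∑ i : Fin n, if (i:ℕ) < n - 1 then Pinv z i * z i else 0) - u (Pinv z))
        =ᶠ[nhds y] ustar := by
      filter_upwards [hW.eventually_mem hy] with z hz
      rw [hustar z]
      congr 1
      apply Finset.sum_congr rfl
      intro i _
      by_cases hi : (i:ℕ) < n - 1
      · rw [if_pos hi, if_pos hi, hgrad z hz i hi]
      · rw [if_neg hi, if_neg hi]
    exact hDeq ▸ (hFder.congr_of_eventuallyEq hev.symm)
  have hfd : ∀ y ∈ W, fderiv ℝ ustar y = PLT.Gmap n hn u Pinv y :=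
    fun y hy => (hust y hy).fderiv
  -- second derivatives
  have hsec1 : ∀ y ∈ W, ∀ j : Fin n, (j:ℕ) < n - 1 →
      HasFDerivAt (fun z => fderiv ℝ ustar z (EuclideanSpace.single j 1))
        ((EuclideanSpace.proj j : EuclideanSpace ℝ (Fin n) →L[ℝ] ℝ).comp
          (Matrix.toEuclideanCLM (𝕜 := ℝ) (PLT.Mfrom hn (Hess n u (Pinv y)))⁻¹)) y := by
    intro y hy j hj
    have base : HasFDerivAt (fun z => Pinv z j)
        ((EuclideanSpace.proj j : EuclideanSpace ℝ (Fin n) →L[ℝ] ℝ).comp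
          (Matrix.toEuclideanCLM (𝕜 := ℝ) (PLT.Mfrom hn (Hess n u (Pinv y)))⁻¹)) y :=
      ((EuclideanSpace.proj j : EuclideanSpace ℝ (Fin n) →L[ℝ] ℝ).hasFDerivAt).comp y (hDPinv y hy)
    apply base.congr_of_eventuallyEq
    exact (hW.eventually_mem hy).mono (fun z hz => by
      show fderiv ℝ ustar z (EuclideanSpace.single j 1) = Pinv z j
      rw [hfd z hz, PLT.Gmap_single, if_pos hj])
  have hsec2 : ∀ y ∈ W,
      HasFDerivAt (fun z => fderiv ℝ ustar z (EuclideanSpace.single (lastIdx n hn) 1))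
        (-(((ContinuousLinearMap.apply ℝ ℝ (EuclideanSpace.single (lastIdx n hn) (1:ℝ))).comp
            (fderiv ℝ (fderiv ℝ u) (Pinv y))).comp
          (Matrix.toEuclideanCLM (𝕜 := ℝ) (PLT.Mfrom hn (Hess n u (Pinv y)))⁻¹))) y := by
    intro y hy
    have hx := hPinvV y hy
    have base := ((PLT.hasFDerivAt_partial u (Pinv y) (hVd2 _ hx) (lastIdx n hn)).comp y
      (hDPinv y hy)).neg
    apply base.congr_of_eventuallyEq
    exact (hW.eventually_mem hy).mono (fun z hz => by
      show fderiv ℝ ustar z (EuclideanSpace.single (lastIdx n hn) 1)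
        = -(fderiv ℝ u (Pinv z) (EuclideanSpace.single (lastIdx n hn) 1))
      rw [hfd z hz, PLT.Gmap_single, if_neg (PLT.last_not_lt hn)])
  -- entries of the Hessian of ustar
  have hH1 : ∀ y ∈ W, ∀ i : Fin n, ∀ j : Fin n, (j:ℕ) < n - 1 →
      Hess n ustar y i j = (PLT.Mfrom hn (Hess n u (Pinv y)))⁻¹ j i := by
    intro y hy i j hj
    show fderiv ℝ (fun z => fderiv ℝ ustar z (EuclideanSpace.single j 1)) y
      (EuclideanSpace.single i 1) = _
    rw [(hsec1 y hy j hj).fderiv]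
    show (Matrix.toEuclideanCLM (𝕜 := ℝ) (PLT.Mfrom hn (Hess n u (Pinv y)))⁻¹
      (EuclideanSpace.single i 1)) j = _
    rw [PLT.toCLM_apply_single]
  have hH2 : ∀ y ∈ W, ∀ i : Fin n,
      Hess n ustar y i (lastIdx n hn)
        = -∑ k, (PLT.Mfrom hn (Hess n u (Pinv y)))⁻¹ k i * Hess n u (Pinv y) k (lastIdx n hn) := by
    intro y hy i
    have hx := hPinvV y hy
    show fderiv ℝ (fun z => fderiv ℝ ustar z (EuclideanSpace.single (lastIdx n hn) 1)) y
      (EuclideanSpace.single i 1) = _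
    rw [(hsec2 y hy).fderiv]
    show -(fderiv ℝ (fderiv ℝ u) (Pinv y)
      (Matrix.toEuclideanCLM (𝕜 := ℝ) (PLT.Mfrom hn (Hess n u (Pinv y)))⁻¹
        (EuclideanSpace.single i 1)) (EuclideanSpace.single (lastIdx n hn) 1)) = _
    rw [PLT.clm2_apply_eq_sum]
    congr 1
    apply Finset.sum_congr rfl
    intro k _
    rw [PLT.toCLM_apply_single, PLT.hess_eq u (Pinv y) (hVd2 _ hx)]
  -- the third bullet: pointwise conclusions
  have main3 : ∀ y ∈ W,
      (∀ i : Fin n, (i : ℕ) < n - 1 →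
        fderiv ℝ ustar y (EuclideanSpace.single i 1) = Pinv y i) ∧
      fderiv ℝ ustar y (EuclideanSpace.single (lastIdx n hn) 1)
        = - fderiv ℝ u (Pinv y) (EuclideanSpace.single (lastIdx n hn) 1) ∧
      (∀ Mx My : Matrix (Fin (n - 1)) (Fin (n - 1)) ℝ,
        Mx = Matrix.of (fun i j => Hess n u (Pinv y)
          (Fin.castLE (Nat.sub_le n 1) i) (Fin.castLE (Nat.sub_le n 1) j)) →
        My = Matrix.of (fun i j => Hess n ustar y
          (Fin.castLE (Nat.sub_le n 1) i) (Fin.castLE (Nat.sub_le n 1) j)) →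
        My * Mx = 1 ∧ Mx * My = 1 ∧
        - Hess n ustar y (lastIdx n hn) (lastIdx n hn)
          = (Hess n u (Pinv y)).det * My.det) := by
    intro y hy
    have hx := hPinvV y hy
    refine ⟨?_, ?_, ?_⟩
    · intro i hi
      rw [hfd y hy, PLT.Gmap_single, if_pos hi]
    · rw [hfd y hy, PLT.Gmap_single, if_neg (PLT.last_not_lt hn)]
    · intro Mx My hMx hMy
      have hMyN : My = Matrix.transpose (Matrix.of fun i j : Fin (n-1) =>
          (PLT.Mfrom hn (Hess n u (Pinv y)))⁻¹
            (Fin.castLE (Nat.sub_le n 1) i) (Fin.castLE (Nat.sub_le n 1) j)) := by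
        rw [hMy]
        ext i j
        simp only [Matrix.transpose_apply, Matrix.of_apply]
        exact hH1 y hy _ _ (PLT.castLE_lt j)
      have hblock := PLT.block_mul_one hn (Hess n u (Pinv y)) _ (hMN y hy)
      have hMxN : Mx * (Matrix.of fun i j : Fin (n-1) =>
          (PLT.Mfrom hn (Hess n u (Pinv y)))⁻¹
            (Fin.castLE (Nat.sub_le n 1) i) (Fin.castLE (Nat.sub_le n 1) j)) = 1 := by
        rw [hMx]; exact hblock
      have hMyMx : My * Mx = 1 := by
        have ht := congrArg Matrix.transpose hMxN
        rw [Matrix.transpose_mul, Matrix.transpose_one] at ht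
        have hMxT : Matrix.transpose Mx = Mx := by
          rw [hMx]; ext i j
          rw [Matrix.transpose_apply, Matrix.of_apply, Matrix.of_apply, hHsymm _ hx]
        rw [hMxT] at ht
        rw [hMyN]
        exact ht
      refine ⟨hMyMx, mul_eq_one_comm.mp hMyMx, ?_⟩
      have hdk := PLT.det_key hn (Hess n u (Pinv y)) _ (hMN y hy) (hHsymm _ hx)
      have hdb := PLT.det_N_block hn (Hess n u (Pinv y)) _ (hMN y hy)
      have hMydet : My.det = ((PLT.Mfrom hn (Hess n u (Pinv y)))⁻¹).det := by
        rw [hMyN, Matrix.det_transpose, hdb]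
      rw [hH2 y hy, hMydet, neg_neg, hdk]
      apply Finset.sum_congr rfl
      intro k _
      ring
  refine ⟨?_, ?_, main3, ?_⟩
  · -- TwiceDiffAt
    intro y hy
    refine ⟨(hust y hy).differentiableAt, ?_⟩
    intro j
    rcases PLT.lt_cases hn j with hj | hj
    · exact (hsec1 y hy j hj).differentiableAt
    · rw [hj]; exact (hsec2 y hy).differentiableAt
  · -- ContinuousOn fderiv
    have hGcont : ContinuousOn (fun y => PLT.Gmap n hn u Pinv y) W := by
      unfold PLT.Gmap
      apply ContinuousOn.sub
      · apply continuousOn_finset_sum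
        intro i _
        by_cases hi : (i:ℕ) < n - 1
        · simp only [if_pos hi]
          exact ContinuousOn.smul
            ((EuclideanSpace.proj i : EuclideanSpace ℝ (Fin n) →L[ℝ] ℝ).continuous.comp_continuousOn
              hPinv_cont) continuousOn_const
        · simp only [if_neg hi]
          exact continuousOn_const
      · apply ContinuousOn.fun_smul _ continuousOn_const
        have hg : ContinuousOn
            (fun x => fderiv ℝ u x (EuclideanSpace.single (lastIdx n hn) 1)) V :=
          (ContinuousLinearMap.apply ℝ ℝ
            (EuclideanSpace.single (lastIdx n hn) (1:ℝ))).continuous.comp_continuousOn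
            hC1.continuousOn
        exact hg.comp hPinv_cont (fun y hy => hPinvV y hy)
    exact hGcont.congr (fun y hy => hfd y hy)
  · -- transformed equation
    intro hdet y hy
    have hx := hPinvV y hy
    obtain ⟨-, h2, h3⟩ := main3 y hy
    obtain ⟨-, -, hkey⟩ := h3 _ _ rfl rfl
    rw [h2, neg_neg]
    have hdetx := hdet _ hx
    have hyx : xLast n hn y = xLast n hn (Pinv y) := (hlast y hy).symm
    rw [hyx, ← hdetx]
    set Mydet := (Matrix.of (fun i j : Fin (n - 1) => Hess n ustar y
      (Fin.castLE (Nat.sub_le n 1) i) (Fin.castLE (Nat.sub_le n 1) j))).det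
    have : Hess n ustar y (lastIdx n hn) (lastIdx n hn)
        = -((Hess n u (Pinv y)).det * Mydet) := by
      rw [← hkey, neg_neg]
    rw [this]
    ring
end
end
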